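/- Let P and Q be orthogonal projections on a complex Hilbert space H such that ker(Q) ∩ range(P) = {0} and ker(P) ∩ range(Q) = {0}. Then 1 is not an eigenvalue of (Q − P)²; that is, ker(1 − (Q − P)²) = {0}. -/

import Mathlib

/-- Let `P, Q` be orthogonal projections on a complex Hilbert space with
`ker Q ∩ range P = {0}` and `ker P ∩ range Q = {0}`.  Then `1` is not an eigenvalue of
`(Q - P)²`, i.e. `ker (1 - (Q - P)²) = {0}`. -/
theorem one_not_eigenvalue_of_trivial_intersections {H : Type*} [NormedAddCommGroup H]
    [InnerProductSpace ℂ H] [CompleteSpace H] (P Q : H →L[ℂ] H)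
    (hP : IsIdempotentElem P) (hPs : IsSelfAdjoint P)
    (hQ : IsIdempotentElem Q) (hQs : IsSelfAdjoint Q)
    (h1 : LinearMap.ker (Q : H →ₗ[ℂ] H) ⊓ LinearMap.range (P : H →ₗ[ℂ] H) = ⊥)
    (h2 : LinearMap.ker (P : H →ₗ[ℂ] H) ⊓ LinearMap.range (Q : H →ₗ[ℂ] H) = ⊥) :
    LinearMap.ker ((1 - (Q - P) ^ 2 : H →L[ℂ] H) : H →ₗ[ℂ] H) = ⊥ := by
  have hPad : ContinuousLinearMap.adjoint P = P := hPs
  have hQad : ContinuousLinearMap.adjoint Q = Q := hQs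
  have hPP : ∀ y, P (P y) = P y := fun y => by
    have := DFunLike.congr_fun hP y
    simpa [ContinuousLinearMap.mul_apply] using this
  have hQQ : ∀ y, Q (Q y) = Q y := fun y => by
    have := DFunLike.congr_fun hQ y
    simpa [ContinuousLinearMap.mul_apply] using this
  have hPinner : ∀ a b : H, inner ℂ (P a) b = (inner ℂ a (P b) : ℂ) := fun a b => by
    conv_lhs => rw [← hPad]
    exact ContinuousLinearMap.adjoint_inner_left P b a
  have hQinner : ∀ a b : H, inner ℂ (Q a) b = (inner ℂ a (Q b) : ℂ) := fun a b => by
    conv_lhs => rw [← hQad]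
    exact ContinuousLinearMap.adjoint_inner_left Q b a
  rw [Submodule.eq_bot_iff]
  intro x hx
  rw [LinearMap.mem_ker] at hx
  have hE : Q (Q x) - P (Q x) - (Q (P x) - P (P x)) = x := by
    have h0 : x - ((Q - P) ((Q - P) x)) = 0 := by
      simpa [pow_two, ContinuousLinearMap.sub_apply, ContinuousLinearMap.mul_apply,
        ContinuousLinearMap.one_apply] using hx
    have h1 := sub_eq_zero.mp h0
    rw [sub_sub_sub_comm]
    simpa [ContinuousLinearMap.map_sub, ContinuousLinearMap.sub_apply] using h1.symm
  -- apply P to hE : get P Q P x = 0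
  have hPQP : P (Q (P x)) = 0 := by
    have h := congrArg P hE
    simp only [map_sub, hPP, hQQ] at h
    rw [sub_self, zero_sub, neg_sub] at h
    exact sub_eq_self.mp h
  -- apply Q to hE : get Q P Q x = 0
  have hQPQ : Q (P (Q x)) = 0 := by
    have h := congrArg Q hE
    simp only [map_sub, hQQ, hPP] at h
    rw [sub_self, sub_zero] at h
    exact sub_eq_self.mp h
  have hQP : Q (P x) = 0 := by
    have : (inner ℂ (Q (P x)) (Q (P x)) : ℂ) = 0 := by
      rw [hQinner, hQQ, hPinner, hPQP, inner_zero_right]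
    exact inner_self_eq_zero.mp this
  have hPQ : P (Q x) = 0 := by
    have : (inner ℂ (P (Q x)) (P (Q x)) : ℂ) = 0 := by
      rw [hPinner, hPP, hQinner, hQPQ, inner_zero_right]
    exact inner_self_eq_zero.mp this
  have hPx : P x = 0 := by
    have : P x ∈ LinearMap.ker (Q : H →ₗ[ℂ] H) ⊓ LinearMap.range (P : H →ₗ[ℂ] H) := ⟨by simpa using hQP, ⟨x, rfl⟩⟩
    simpa [h1] using this
  have hQx : Q x = 0 := by
    have : Q x ∈ LinearMap.ker (P : H →ₗ[ℂ] H) ⊓ LinearMap.range (Q : H →ₗ[ℂ] H) := ⟨by simpa using hPQ, ⟨x, rfl⟩⟩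
    simpa [h2] using this
  have h := hE
  rw [hPx, hQx] at h
  simpa using h.symm
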